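/- Fix 1 ≤ k < n and let G be the graph whose vertex set is the k-slice V = {x ∈ {0,1}^n : Σᵢ xᵢ = k}, with x ~ y whenever x and y differ in exactly two coordinates. Then Ric(G) = 1 + n/2: for every f:V→ℝ and every vertex x, Γ₂(f)(x) ≥ (1 + n/2)·Γ(f)(x), and 1 + n/2 is the largest constant with this property. -/

import Mathlib

noncomputable section
open Matrix

/-- The graph Laplacian: `Δ f (x) = Σ_{y ~ x} (f y - f x)`. -/
def lap {V : Type*} (G : SimpleGraph V) (f : V → ℝ) (x : V) : ℝ :=
  ∑ᶠ y ∈ {y | G.Adj x y}, (f y - f x)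

/-- The carré du champ `Γ(f,g)(x) = (1/2) Σ_{y ~ x} (f x - f y)(g x - g y)`. -/
def gam {V : Type*} (G : SimpleGraph V) (f g : V → ℝ) (x : V) : ℝ :=
  (1/2) * ∑ᶠ y ∈ {y | G.Adj x y}, (f x - f y) * (g x - g y)

/-- The iterated carré du champ `Γ₂(f) = (1/2) Δ Γ(f) - Γ(f, Δ f)`. -/
def gam2 {V : Type*} (G : SimpleGraph V) (f : V → ℝ) (x : V) : ℝ :=
  (1/2) * lap G (gam G f f) x - gam G f (lap G f) x

/-- `Ric(G) ≥ K` : the Bochner inequality `Γ₂(f)(x) ≥ K Γ(f)(x)` holds for all `f, x`. -/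
def RicGE {V : Type*} (G : SimpleGraph V) (K : ℝ) : Prop :=
  ∀ (f : V → ℝ) (x : V), K * gam G f f x ≤ gam2 G f x

/-- The `k`-slice of the `n`-cube: 0/1-vectors with exactly `k` ones. -/
def Slice (n k : ℕ) : Type :=
  {x : Fin n → Bool // (Finset.univ.filter fun i => x i = true).card = k}

/-- The slice graph: two 0/1-vectors with `k` ones are adjacent iff they differ in
exactly two coordinates (i.e. a transposition). -/
def sliceGraph (n k : ℕ) : SimpleGraph (Slice n k) where
  Adj x y := (Finset.univ.filter fun i => x.1 i ≠ y.1 i).card = 2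
  symm := ⟨by
    intro x y h
    have : (Finset.univ.filter fun i => y.1 i ≠ x.1 i)
        = (Finset.univ.filter fun i => x.1 i ≠ y.1 i) := by
      apply Finset.filter_congr
      intro i _
      exact ⟨Ne.symm, Ne.symm⟩
    rw [this]
    exact h⟩
  loopless := ⟨by intro x h; simp at h⟩

set_option linter.unusedSectionVars false

namespace RicSlice

variable {V : Type*} [Fintype V] [DecidableEq V] (G : SimpleGraph V) [DecidableRel G.Adj]

def nbh (x : V) : Finset V := Finset.univ.filter (G.Adj x)

lemma mem_nbh {x y : V} : y ∈ nbh G x ↔ G.Adj x y := by simp [nbh]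

lemma set_eq (x : V) : {y | G.Adj x y} = (↑(nbh G x) : Set V) := by
  ext y; simp [nbh]

lemma lap_eq (f : V → ℝ) (x : V) : lap G f x = ∑ y ∈ nbh G x, (f y - f x) := by
  rw [lap, set_eq, finsum_mem_coe_finset]

lemma gam_eq (f g : V → ℝ) (x : V) :
    gam G f g x = (1/2) * ∑ y ∈ nbh G x, (f x - f y) * (g x - g y) := by
  rw [gam, set_eq]; rw [finsum_mem_coe_finset]

lemma gam_sq (f : V → ℝ) (x : V) :
    gam G f f x = (1/2) * ∑ y ∈ nbh G x, (f x - f y)^2 := by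
  rw [gam_eq]; congr 1; apply Finset.sum_congr rfl; intro y _; ring

lemma gam2_eq (f : V → ℝ) (x : V) :
    gam2 G f x = (1/4) * ∑ y ∈ nbh G x, ∑ z ∈ nbh G y, (f x - 2*f y + f z)^2
      - (1/4) * ∑ y ∈ nbh G x, (((nbh G x).card : ℝ) + ((nbh G y).card : ℝ)) * (f x - f y)^2
      + (1/2) * (lap G f x)^2 := by
  have h1 : ∀ y : V, ∑ z ∈ nbh G y, (f x - 2*f y + f z)^2
      = ((nbh G y).card : ℝ) * (f x - f y)^2 + 2*(f x - f y)*(lap G f y)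
        + 2 * gam G f f y := by
    intro y
    calc ∑ z ∈ nbh G y, (f x - 2*f y + f z)^2
        = ∑ z ∈ nbh G y, ((f x - f y)^2 + 2*(f x - f y)*(f z - f y)
            + (f y - f z)*(f y - f z)) := by
          apply Finset.sum_congr rfl; intro z _; ring
      _ = _ := by
          rw [Finset.sum_add_distrib, Finset.sum_add_distrib, Finset.sum_const,
            ← Finset.mul_sum, ← lap_eq, gam_eq]
          push_cast; ring
  have hlapx : ∑ y ∈ nbh G x, (f x - f y) = - lap G f x := by
    rw [lap_eq, Finset.sum_sub_distrib, Finset.sum_sub_distrib]; ring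
  rw [gam2, lap_eq G (gam G f f) x, gam_eq G f (lap G f) x]
  have hsplit : ∑ y ∈ nbh G x, (f x - f y) * (lap G f x - lap G f y)
      = (∑ y ∈ nbh G x, (f x - f y)) * lap G f x
        - ∑ y ∈ nbh G x, (f x - f y) * lap G f y := by
    rw [Finset.sum_mul, ← Finset.sum_sub_distrib]
    apply Finset.sum_congr rfl; intro y _; ring
  have hsplit2 : ∑ y ∈ nbh G x, (((nbh G x).card : ℝ) + ((nbh G y).card : ℝ)) * (f x - f y)^2
      = ((nbh G x).card : ℝ) * ∑ y ∈ nbh G x, (f x - f y)^2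
        + ∑ y ∈ nbh G x, ((nbh G y).card : ℝ) * (f x - f y)^2 := by
    rw [Finset.mul_sum, ← Finset.sum_add_distrib]
    apply Finset.sum_congr rfl; intro y _; ring
  have hsum1 : ∑ y ∈ nbh G x, (gam G f f y - gam G f f x)
      = (∑ y ∈ nbh G x, gam G f f y)
        - ((nbh G x).card : ℝ) * ((1/2) * ∑ y ∈ nbh G x, (f x - f y)^2) := by
    rw [Finset.sum_sub_distrib, Finset.sum_const, ← gam_sq, nsmul_eq_mul]
  have hsum2 : ∑ y ∈ nbh G x, ∑ z ∈ nbh G y, (f x - 2*f y + f z)^2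
      = ∑ y ∈ nbh G x, ((nbh G y).card : ℝ) * (f x - f y)^2
        + 2 * ∑ y ∈ nbh G x, (f x - f y)*(lap G f y)
        + 2 * ∑ y ∈ nbh G x, gam G f f y := by
    rw [Finset.mul_sum, Finset.mul_sum, ← Finset.sum_add_distrib, ← Finset.sum_add_distrib]
    apply Finset.sum_congr rfl; intro y _; rw [h1 y]; ring
  rw [hsum1, hsum2, hsplit, hsplit2, hlapx]
  ring

end RicSlice

namespace RicSlice

variable {n k : ℕ}

instance : DecidableEq (Slice n k) := fun x y =>
  decidable_of_iff (x.1 = y.1) Subtype.ext_iff.symm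

instance : Fintype (Slice n k) :=
  Subtype.fintype _

instance : DecidableRel (sliceGraph n k).Adj := fun x y =>
  instDecidableEqNat _ 2

def Sx (x : Slice n k) : Finset (Fin n) := Finset.univ.filter (fun t => x.1 t = true)
def Tx (x : Slice n k) : Finset (Fin n) := Finset.univ.filter (fun t => x.1 t = false)

lemma mem_Sx {x : Slice n k} {t : Fin n} : t ∈ Sx x ↔ x.1 t = true := by simp [Sx]
lemma mem_Tx {x : Slice n k} {t : Fin n} : t ∈ Tx x ↔ x.1 t = false := by simp [Tx]

lemma card_Sx (x : Slice n k) : (Sx x).card = k := x.2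

lemma card_Sx_add_card_Tx (x : Slice n k) : (Sx x).card + (Tx x).card = n := by
  classical
  have h := Finset.card_filter_add_card_filter_not
    (s := (Finset.univ : Finset (Fin n))) (p := fun t => x.1 t = true)
  have h2 : (Finset.univ.filter (fun t => ¬ x.1 t = true)) = Tx x := by
    apply Finset.filter_congr; intro t _; simp
  rw [h2] at h
  simpa [Sx] using h

lemma card_Tx (x : Slice n k) : (Tx x).card = n - k := by
  have := card_Sx_add_card_Tx x
  rw [card_Sx] at this
  omega

def flipf (v : Fin n → Bool) (i j : Fin n) : Fin n → Bool :=
  fun t => if t = i ∨ t = j then !(v t) else v t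

lemma Sfilter_flipf {x : Slice n k} {i j : Fin n} (hi : x.1 i = true) (hj : x.1 j = false) :
    (Finset.univ.filter fun t => flipf x.1 i j t = true) = insert j ((Sx x).erase i) := by
  have hij : i ≠ j := by intro h; rw [h, hj] at hi; exact Bool.noConfusion hi
  ext t
  simp only [Finset.mem_filter, Finset.mem_univ, true_and, Finset.mem_insert,
    Finset.mem_erase, mem_Sx, flipf]
  by_cases h1 : t = i
  · subst h1; simp [hij, hi]
  · by_cases h2 : t = j
    · subst h2; simp [hj]
    · simp [h1, h2]

lemma card_flipf {x : Slice n k} {i j : Fin n} (hi : x.1 i = true) (hj : x.1 j = false) :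
    (Finset.univ.filter fun t => flipf x.1 i j t = true).card = k := by
  rw [Sfilter_flipf hi hj]
  have hjS : j ∉ (Sx x).erase i := by
    intro h; have := mem_Sx.1 (Finset.mem_of_mem_erase h); rw [hj] at this; exact Bool.noConfusion this
  rw [Finset.card_insert_of_notMem hjS, Finset.card_erase_add_one (mem_Sx.2 hi), card_Sx]

def flipS (x : Slice n k) (i j : Fin n) : Slice n k :=
  if h : x.1 i = true ∧ x.1 j = false then ⟨flipf x.1 i j, card_flipf h.1 h.2⟩ else x

lemma flipS_val {x : Slice n k} {i j : Fin n} (hi : x.1 i = true) (hj : x.1 j = false) :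
    (flipS x i j).1 = flipf x.1 i j := by
  have hd : flipS x i j = ⟨flipf x.1 i j, card_flipf hi hj⟩ := dif_pos ⟨hi, hj⟩
  exact congrArg Subtype.val hd

lemma flipf_ne_iff {x : Slice n k} {i j : Fin n} (hi : x.1 i = true) (hj : x.1 j = false)
    (t : Fin n) : x.1 t ≠ flipf x.1 i j t ↔ (t = i ∨ t = j) := by
  by_cases h : t = i ∨ t = j
  · simp [flipf, h]
  · simp [flipf, h]

lemma adj_flipS {x : Slice n k} {i j : Fin n} (hi : x.1 i = true) (hj : x.1 j = false) :
    (sliceGraph n k).Adj x (flipS x i j) := by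
  have hij : i ≠ j := by intro h; rw [h, hj] at hi; exact Bool.noConfusion hi
  show (Finset.univ.filter fun t => x.1 t ≠ (flipS x i j).1 t).card = 2
  have : (Finset.univ.filter fun t => x.1 t ≠ (flipS x i j).1 t) = {i, j} := by
    ext t
    simp only [Finset.mem_filter, Finset.mem_univ, true_and, flipS_val hi hj,
      flipf_ne_iff hi hj, Finset.mem_insert, Finset.mem_singleton]
  rw [this, Finset.card_insert_of_notMem (by simp [hij]), Finset.card_singleton]

end RicSlice

namespace RicSlice

variable {n k : ℕ}

lemma adj_exists {x y : Slice n k} (h : (sliceGraph n k).Adj x y) :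
    ∃ i ∈ Sx x, ∃ j ∈ Tx x, y = flipS x i j := by
  classical
  have hD : (Finset.univ.filter fun t => x.1 t ≠ y.1 t).card = 2 := h
  have hsplit : (Finset.univ.filter fun t => x.1 t ≠ y.1 t)
      = (Sx x \ Sx y) ∪ (Sx y \ Sx x) := by
    ext t
    simp only [Finset.mem_filter, Finset.mem_univ, true_and, Finset.mem_union,
      Finset.mem_sdiff, mem_Sx]
    cases hxt : x.1 t <;> cases hyt : y.1 t <;> simp
  have hcards : (Sx x \ Sx y).card = (Sx y \ Sx x).card := by
    apply Finset.card_sdiff_comm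
    rw [card_Sx, card_Sx]
  have hdisj : Disjoint (Sx x \ Sx y) (Sx y \ Sx x) := disjoint_sdiff_sdiff
  have hsum : (Sx x \ Sx y).card + (Sx y \ Sx x).card = 2 := by
    rw [← Finset.card_union_of_disjoint hdisj, ← hsplit, hD]
  have hone : (Sx x \ Sx y).card = 1 := by omega
  have hone' : (Sx y \ Sx x).card = 1 := by omega
  obtain ⟨i, hi⟩ := Finset.card_eq_one.1 hone
  obtain ⟨j, hj⟩ := Finset.card_eq_one.1 hone'
  have hiX : x.1 i = true ∧ y.1 i = false := by
    have : i ∈ Sx x \ Sx y := by rw [hi]; exact Finset.mem_singleton_self i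
    rw [Finset.mem_sdiff, mem_Sx, mem_Sx] at this
    exact ⟨this.1, by simpa using this.2⟩
  have hjX : x.1 j = false ∧ y.1 j = true := by
    have : j ∈ Sx y \ Sx x := by rw [hj]; exact Finset.mem_singleton_self j
    rw [Finset.mem_sdiff, mem_Sx, mem_Sx] at this
    exact ⟨by simpa using this.2, this.1⟩
  refine ⟨i, mem_Sx.2 hiX.1, j, mem_Tx.2 hjX.1, ?_⟩
  apply Subtype.ext
  rw [flipS_val hiX.1 hjX.1]
  funext t
  by_cases h1 : t = i
  · subst h1; simp [flipf, hiX.1, hiX.2]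
  · by_cases h2 : t = j
    · subst h2; simp [flipf, hjX.1, hjX.2]
    · have : t ∉ (Finset.univ.filter fun t => x.1 t ≠ y.1 t) := by
        rw [hsplit, hi, hj]
        simp [h1, h2]
      simp only [Finset.mem_filter, Finset.mem_univ, true_and, not_not] at this
      simp [flipf, h1, h2, this]

lemma flipS_injOn (x : Slice n k) : ∀ p ∈ Sx x ×ˢ Tx x, ∀ q ∈ Sx x ×ˢ Tx x,
    flipS x p.1 p.2 = flipS x q.1 q.2 → p = q := by
  rintro ⟨i, j⟩ hp ⟨i', j'⟩ hq heq
  rw [Finset.mem_product, mem_Sx, mem_Tx] at hp hq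
  obtain ⟨hi, hj⟩ := hp
  obtain ⟨hi', hj'⟩ := hq
  have hval : ∀ t, flipf x.1 i j t = flipf x.1 i' j' t := by
    intro t
    have := congrArg (fun z => z.1 t) heq
    simpa [flipS_val hi hj, flipS_val hi' hj'] using this
  have h1 : i = i' := by
    have hv := hval i
    simp only [flipf, if_pos (Or.inl rfl)] at hv
    by_cases hii : i = i' ∨ i = j'
    · rcases hii with h | h
      · exact h
      · rw [h, hj'] at hi; exact Bool.noConfusion hi
    · rw [if_neg hii, hi] at hv; exact absurd hv (by simp)
  have h2 : j = j' := by
    have hv := hval j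
    simp only [flipf, if_pos (Or.inr rfl)] at hv
    by_cases hjj : j = i' ∨ j = j'
    · rcases hjj with h | h
      · rw [h, hi'] at hj; exact Bool.noConfusion hj
      · exact h
    · rw [if_neg hjj, hj] at hv; exact absurd hv (by simp)
  simp [h1, h2]

lemma nbh_eq (x : Slice n k) :
    nbh (sliceGraph n k) x = ((Sx x) ×ˢ (Tx x)).image (fun p => flipS x p.1 p.2) := by
  ext y
  rw [mem_nbh, Finset.mem_image]
  constructor
  · intro h
    obtain ⟨i, hi, j, hj, hy⟩ := adj_exists h
    exact ⟨(i, j), Finset.mem_product.2 ⟨hi, hj⟩, hy.symm⟩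
  · rintro ⟨⟨i, j⟩, hm, rfl⟩
    rw [Finset.mem_product, mem_Sx, mem_Tx] at hm
    exact adj_flipS hm.1 hm.2

lemma sum_nbh (x : Slice n k) (g : Slice n k → ℝ) :
    ∑ y ∈ nbh (sliceGraph n k) x, g y = ∑ i ∈ Sx x, ∑ j ∈ Tx x, g (flipS x i j) := by
  rw [nbh_eq, Finset.sum_image (flipS_injOn x), Finset.sum_product]

lemma card_nbh (x : Slice n k) : (nbh (sliceGraph n k) x).card = k * (n - k) := by
  rw [nbh_eq, Finset.card_image_of_injOn (flipS_injOn x), Finset.card_product,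
    card_Sx, card_Tx]

end RicSlice

namespace RicSlice

variable {n k : ℕ}

lemma ne_of_tf {x : Slice n k} {s t : Fin n} (hs : x.1 s = true) (ht : x.1 t = false) :
    s ≠ t := fun h => by rw [h, ht] at hs; exact Bool.noConfusion hs

lemma flipS_apply {x : Slice n k} {i j : Fin n} (hi : x.1 i = true) (hj : x.1 j = false)
    (t : Fin n) : (flipS x i j).1 t = if t = i ∨ t = j then !(x.1 t) else x.1 t := by
  rw [flipS_val hi hj]; rfl

lemma flipS_j {x : Slice n k} {i j : Fin n} (hi : x.1 i = true) (hj : x.1 j = false) :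
    (flipS x i j).1 j = true := by rw [flipS_apply hi hj]; simp [hj]

lemma flipS_i {x : Slice n k} {i j : Fin n} (hi : x.1 i = true) (hj : x.1 j = false) :
    (flipS x i j).1 i = false := by rw [flipS_apply hi hj]; simp [hi]

lemma flipS_other {x : Slice n k} {i j : Fin n} (hi : x.1 i = true) (hj : x.1 j = false)
    {t : Fin n} (h1 : t ≠ i) (h2 : t ≠ j) : (flipS x i j).1 t = x.1 t := by
  rw [flipS_apply hi hj]; simp [h1, h2]

lemma flip_inv {x : Slice n k} {i j : Fin n} (hi : x.1 i = true) (hj : x.1 j = false) :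
    flipS (flipS x i j) j i = x := by
  have hij : i ≠ j := ne_of_tf hi hj
  apply Subtype.ext
  rw [flipS_val (flipS_j hi hj) (flipS_i hi hj)]
  funext t
  simp only [flipf, flipS_val hi hj]
  by_cases h1 : t = i <;> by_cases h2 : t = j <;> simp_all

lemma flip_row {x : Slice n k} {i j v : Fin n} (hi : x.1 i = true) (hj : x.1 j = false)
    (hv : x.1 v = false) (hvj : v ≠ j) :
    flipS (flipS x i j) j v = flipS x i v := by
  have hij : i ≠ j := ne_of_tf hi hj
  have hiv : i ≠ v := ne_of_tf hi hv
  have hyv : (flipS x i j).1 v = false := by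
    rw [flipS_other hi hj (Ne.symm hiv) hvj]; exact hv
  apply Subtype.ext
  rw [flipS_val (flipS_j hi hj) hyv, flipS_val hi hv]
  funext t
  simp only [flipf, flipS_val hi hj]
  by_cases h1 : t = i <;> by_cases h2 : t = j <;> by_cases h3 : t = v <;> simp_all

lemma flip_col {x : Slice n k} {i j u : Fin n} (hi : x.1 i = true) (hj : x.1 j = false)
    (hu : x.1 u = true) (hui : u ≠ i) :
    flipS (flipS x i j) u i = flipS x u j := by
  have hij : i ≠ j := ne_of_tf hi hj
  have huj : u ≠ j := ne_of_tf hu hj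
  have hyu : (flipS x i j).1 u = true := by
    rw [flipS_other hi hj hui huj]; exact hu
  apply Subtype.ext
  rw [flipS_val hyu (flipS_i hi hj), flipS_val hu hj]
  funext t
  simp only [flipf, flipS_val hi hj]
  by_cases h1 : t = i <;> by_cases h2 : t = j <;> by_cases h3 : t = u <;> simp_all

lemma flip2_mem {x : Slice n k} {i j u v : Fin n} (hi : x.1 i = true) (hj : x.1 j = false)
    (hu : x.1 u = true) (hui : u ≠ i) (hv : x.1 v = false) (hvj : v ≠ j) :
    (flipS x i j).1 u = true ∧ (flipS x i j).1 v = false :=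
  ⟨by rw [flipS_other hi hj hui (ne_of_tf hu hj)]; exact hu,
   by rw [flipS_other hi hj (Ne.symm (ne_of_tf hi hv)) hvj]; exact hv⟩

lemma flip2_symm_left {x : Slice n k} {i j u v : Fin n} (hi : x.1 i = true)
    (hj : x.1 j = false) (hu : x.1 u = true) (hui : u ≠ i) (hv : x.1 v = false)
    (hvj : v ≠ j) :
    flipS (flipS x i j) u v = flipS (flipS x u j) i v := by
  have hij : i ≠ j := ne_of_tf hi hj
  have huj : u ≠ j := ne_of_tf hu hj
  have hiv : i ≠ v := ne_of_tf hi hv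
  have huv : u ≠ v := ne_of_tf hu hv
  obtain ⟨h1u, h1v⟩ := flip2_mem hi hj hu hui hv hvj
  obtain ⟨h2i, h2v⟩ := flip2_mem hu hj hi (Ne.symm hui) hv hvj
  apply Subtype.ext
  rw [flipS_val h1u h1v, flipS_val h2i h2v]
  funext t
  simp only [flipf, flipS_val hi hj, flipS_val hu hj]
  by_cases e1 : t = i <;> by_cases e2 : t = j <;> by_cases e3 : t = u <;>
    by_cases e4 : t = v <;> simp_all

lemma flip2_symm_right {x : Slice n k} {i j u v : Fin n} (hi : x.1 i = true)
    (hj : x.1 j = false) (hu : x.1 u = true) (hui : u ≠ i) (hv : x.1 v = false)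
    (hvj : v ≠ j) :
    flipS (flipS x i j) u v = flipS (flipS x i v) u j := by
  have hij : i ≠ j := ne_of_tf hi hj
  have huj : u ≠ j := ne_of_tf hu hj
  have hiv : i ≠ v := ne_of_tf hi hv
  have huv : u ≠ v := ne_of_tf hu hv
  obtain ⟨h1u, h1v⟩ := flip2_mem hi hj hu hui hv hvj
  obtain ⟨h2u, h2j⟩ := flip2_mem hi hv hu hui hj (Ne.symm hvj)
  apply Subtype.ext
  rw [flipS_val h1u h1v, flipS_val h2u h2j]
  funext t
  simp only [flipf, flipS_val hi hj, flipS_val hi hv]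
  by_cases e1 : t = i <;> by_cases e2 : t = j <;> by_cases e3 : t = u <;>
    by_cases e4 : t = v <;> simp_all

end RicSlice

namespace RicSlice

section ALG

variable {ι : Type*} [DecidableEq ι]

def QS (S T : Finset ι) (F : ι → ι → ι → ι → ℝ) : ℝ :=
  ∑ i ∈ S, ∑ j ∈ T, ∑ u ∈ S, ∑ v ∈ T, F i j u v

variable (S T : Finset ι) (a : ι → ι → ℝ)

def PP : ℝ := ∑ i ∈ S, ∑ j ∈ T, (a i j)^2
def AA : ℝ := ∑ i ∈ S, ∑ j ∈ T, a i j
def RR : ℝ := ∑ i ∈ S, (∑ j ∈ T, a i j)^2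
def CC : ℝ := ∑ j ∈ T, (∑ i ∈ S, a i j)^2

lemma sum_indep (s : Finset ι) (c : ℝ) : ∑ _t ∈ s, c = (s.card : ℝ) * c := by
  rw [Finset.sum_const, nsmul_eq_mul]

lemma t_sq_j : ∑ i ∈ S, ∑ j ∈ T, ∑ _v ∈ T, (a i j)^2 = (T.card : ℝ) * PP S T a := by
  rw [PP, Finset.mul_sum]
  refine Finset.sum_congr rfl fun i _ => ?_
  rw [Finset.mul_sum]
  exact Finset.sum_congr rfl fun j _ => sum_indep T ((a i j)^2)

lemma t_sq_v : ∑ i ∈ S, ∑ _j ∈ T, ∑ v ∈ T, (a i v)^2 = (T.card : ℝ) * PP S T a := by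
  rw [PP, Finset.mul_sum]
  exact Finset.sum_congr rfl fun i _ => sum_indep T (∑ v ∈ T, (a i v)^2)

lemma t_cross : ∑ i ∈ S, ∑ j ∈ T, ∑ v ∈ T, (a i j * a i v) = RR S T a := by
  rw [RR]
  refine Finset.sum_congr rfl fun i _ => ?_
  rw [sq, Finset.sum_mul_sum]

lemma s_sq_j : ∑ i ∈ S, ∑ j ∈ T, ∑ _u ∈ S, (a i j)^2 = (S.card : ℝ) * PP S T a := by
  rw [PP, Finset.mul_sum]
  refine Finset.sum_congr rfl fun i _ => ?_
  rw [Finset.mul_sum]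
  exact Finset.sum_congr rfl fun j _ => sum_indep S ((a i j)^2)

lemma s_sq_u : ∑ _i ∈ S, ∑ j ∈ T, ∑ u ∈ S, (a u j)^2 = (S.card : ℝ) * PP S T a := by
  rw [sum_indep S (∑ j ∈ T, ∑ u ∈ S, (a u j)^2)]
  congr 1
  rw [PP, Finset.sum_comm]

lemma s_cross : ∑ i ∈ S, ∑ j ∈ T, ∑ u ∈ S, (a i j * a u j) = CC S T a := by
  rw [Finset.sum_comm, CC]
  refine Finset.sum_congr rfl fun j _ => ?_
  rw [sq, Finset.sum_mul_sum]

lemma q_sq1 : QS S T (fun i j _u _v => (a i j)^2)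
    = (S.card : ℝ) * (T.card : ℝ) * PP S T a := by
  rw [QS, PP]
  calc ∑ i ∈ S, ∑ j ∈ T, ∑ _u ∈ S, ∑ _v ∈ T, (a i j)^2
      = ∑ i ∈ S, ∑ j ∈ T, (S.card : ℝ) * (T.card : ℝ) * (a i j)^2 := by
        refine Finset.sum_congr rfl fun i _ => Finset.sum_congr rfl fun j _ => ?_
        have e1 : ∑ _u ∈ S, ∑ _v ∈ T, (a i j)^2 = ∑ _u ∈ S, (T.card : ℝ) * (a i j)^2 :=
          Finset.sum_congr rfl fun u _ => sum_indep T ((a i j)^2)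
        rw [e1, sum_indep S ((T.card : ℝ) * (a i j)^2)]
        ring
    _ = (S.card : ℝ) * (T.card : ℝ) * ∑ i ∈ S, ∑ j ∈ T, (a i j)^2 := by
        rw [Finset.mul_sum]
        refine Finset.sum_congr rfl fun i _ => ?_
        rw [Finset.mul_sum]

lemma q_sq2 : QS S T (fun i _j _u v => (a i v)^2)
    = (S.card : ℝ) * (T.card : ℝ) * PP S T a := by
  rw [QS, PP]
  have h1 : ∀ i ∈ S, ∀ j ∈ T, ∑ _u ∈ S, ∑ v ∈ T, (a i v)^2
      = (S.card : ℝ) * ∑ v ∈ T, (a i v)^2 :=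
    fun i _ j _ => sum_indep S (∑ v ∈ T, (a i v)^2)
  calc ∑ i ∈ S, ∑ _j ∈ T, ∑ _u ∈ S, ∑ v ∈ T, (a i v)^2
      = ∑ i ∈ S, (T.card : ℝ) * ((S.card : ℝ) * ∑ v ∈ T, (a i v)^2) := by
        refine Finset.sum_congr rfl fun i hi => ?_
        rw [Finset.sum_congr rfl (h1 i hi), sum_indep T _]
    _ = (S.card : ℝ) * (T.card : ℝ) * ∑ i ∈ S, ∑ v ∈ T, (a i v)^2 := by
        rw [Finset.mul_sum]
        exact Finset.sum_congr rfl fun i _ => by ring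

lemma q_sq3 : QS S T (fun _i j u _v => (a u j)^2)
    = (S.card : ℝ) * (T.card : ℝ) * PP S T a := by
  rw [QS, sum_indep S (∑ j ∈ T, ∑ u ∈ S, ∑ _v ∈ T, (a u j)^2)]
  have h1 : ∀ j ∈ T, ∀ u ∈ S, ∑ _v ∈ T, (a u j)^2 = (T.card : ℝ) * (a u j)^2 :=
    fun j _ u _ => sum_indep T _
  have h2 : ∑ j ∈ T, ∑ u ∈ S, ∑ _v ∈ T, (a u j)^2
      = (T.card : ℝ) * ∑ j ∈ T, ∑ u ∈ S, (a u j)^2 := by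
    rw [Finset.mul_sum]
    refine Finset.sum_congr rfl fun j hj => ?_
    rw [Finset.sum_congr rfl (h1 j hj), ← Finset.mul_sum]
  rw [h2, Finset.sum_comm, ← PP]
  ring

lemma q_sq4 : QS S T (fun _i _j u v => (a u v)^2)
    = (S.card : ℝ) * (T.card : ℝ) * PP S T a := by
  rw [QS, sum_indep S (∑ _j ∈ T, ∑ u ∈ S, ∑ v ∈ T, (a u v)^2),
    sum_indep T (∑ u ∈ S, ∑ v ∈ T, (a u v)^2), ← PP]
  ring

lemma q_12 : QS S T (fun i j _u v => (a i j * a i v)) = (S.card : ℝ) * RR S T a := by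
  rw [QS, RR, Finset.mul_sum]
  refine Finset.sum_congr rfl fun i _ => ?_
  calc ∑ j ∈ T, ∑ _u ∈ S, ∑ v ∈ T, (a i j * a i v)
      = ∑ j ∈ T, (S.card : ℝ) * ∑ v ∈ T, (a i j * a i v) :=
        Finset.sum_congr rfl fun j _ => sum_indep S (∑ v ∈ T, (a i j * a i v))
    _ = (S.card : ℝ) * ∑ j ∈ T, ∑ v ∈ T, (a i j * a i v) := (Finset.mul_sum _ _ _).symm
    _ = (S.card : ℝ) * (∑ j ∈ T, a i j)^2 := by rw [sq, Finset.sum_mul_sum]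

lemma q_13 : QS S T (fun i j u _v => (a i j * a u j)) = (T.card : ℝ) * CC S T a := by
  rw [QS, Finset.sum_comm, CC, Finset.mul_sum]
  refine Finset.sum_congr rfl fun j _ => ?_
  rw [sq, Finset.sum_mul_sum, Finset.mul_sum]
  refine Finset.sum_congr rfl fun i _ => ?_
  rw [Finset.mul_sum]
  refine Finset.sum_congr rfl fun u _ => ?_
  rw [sum_indep T (a i j * a u j)]

lemma q_14 : QS S T (fun i j u v => (a i j * a u v)) = (AA S T a)^2 := by
  rw [QS, AA, sq, Finset.sum_mul_sum]
  refine Finset.sum_congr rfl fun i _ => ?_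
  calc ∑ j ∈ T, ∑ u ∈ S, ∑ v ∈ T, (a i j * a u v)
      = ∑ u ∈ S, ∑ j ∈ T, ∑ v ∈ T, (a i j * a u v) := Finset.sum_comm
    _ = ∑ u ∈ S, (∑ j ∈ T, a i j) * (∑ v ∈ T, a u v) := by
        refine Finset.sum_congr rfl fun u _ => ?_
        rw [Finset.sum_mul_sum]

lemma q_23 : QS S T (fun i j u v => (a i v * a u j)) = (AA S T a)^2 := by
  rw [QS, AA, sq, Finset.sum_mul_sum]
  refine Finset.sum_congr rfl fun i _ => ?_
  calc ∑ j ∈ T, ∑ u ∈ S, ∑ v ∈ T, (a i v * a u j)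
      = ∑ u ∈ S, ∑ j ∈ T, ∑ v ∈ T, (a i v * a u j) := Finset.sum_comm
    _ = ∑ u ∈ S, ∑ v ∈ T, ∑ j ∈ T, (a i v * a u j) := by
        exact Finset.sum_congr rfl fun u _ => Finset.sum_comm
    _ = ∑ u ∈ S, (∑ j ∈ T, a i j) * (∑ j ∈ T, a u j) := by
        refine Finset.sum_congr rfl fun u _ => ?_
        rw [Finset.sum_mul_sum]

lemma q_24 : QS S T (fun i _j u v => (a i v * a u v)) = (T.card : ℝ) * CC S T a := by
  rw [QS]
  have h1 : ∀ i ∈ S, ∑ _j ∈ T, ∑ u ∈ S, ∑ v ∈ T, (a i v * a u v)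
      = (T.card : ℝ) * ∑ u ∈ S, ∑ v ∈ T, (a i v * a u v) := fun i _ => sum_indep T _
  rw [Finset.sum_congr rfl h1, ← Finset.mul_sum]
  congr 1
  rw [CC]
  have h2 : ∀ i ∈ S, ∑ u ∈ S, ∑ v ∈ T, (a i v * a u v)
      = ∑ v ∈ T, (a i v * ∑ u ∈ S, a u v) := by
    intro i _
    rw [Finset.sum_comm]
    refine Finset.sum_congr rfl fun v _ => ?_
    rw [Finset.mul_sum]
  rw [Finset.sum_congr rfl h2, Finset.sum_comm]
  refine Finset.sum_congr rfl fun v _ => ?_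
  rw [sq, ← Finset.sum_mul]

lemma q_34 : QS S T (fun _i j u v => (a u j * a u v)) = (S.card : ℝ) * RR S T a := by
  rw [QS, sum_indep S (∑ j ∈ T, ∑ u ∈ S, ∑ v ∈ T, (a u j * a u v))]
  congr 1
  rw [Finset.sum_comm, RR]
  refine Finset.sum_congr rfl fun u _ => ?_
  rw [sq, Finset.sum_mul_sum]

end ALG
end RicSlice

namespace ALG2

variable {ι : Type*} [DecidableEq ι] (S T : Finset ι) (a : ι → ι → ℝ)

open RicSlice

lemma QS_add (F G : ι → ι → ι → ι → ℝ) :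
    QS S T (fun i j u v => F i j u v + G i j u v) = QS S T F + QS S T G := by
  unfold QS; simp only [Finset.sum_add_distrib]

lemma QS_sub (F G : ι → ι → ι → ι → ℝ) :
    QS S T (fun i j u v => F i j u v - G i j u v) = QS S T F - QS S T G := by
  unfold QS; simp only [Finset.sum_sub_distrib]

lemma QS_cmul (c : ℝ) (F : ι → ι → ι → ι → ℝ) :
    QS S T (fun i j u v => c * F i j u v) = c * QS S T F := by
  unfold QS; simp only [← Finset.mul_sum]

-- triple sums with last variable in T
def TV (F : ι → ι → ι → ℝ) : ℝ := ∑ i ∈ S, ∑ j ∈ T, ∑ v ∈ T, F i j v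

lemma TV_add (F G : ι → ι → ι → ℝ) :
    TV S T (fun i j v => F i j v + G i j v) = TV S T F + TV S T G := by
  unfold TV; simp only [Finset.sum_add_distrib]

lemma TV_sub (F G : ι → ι → ι → ℝ) :
    TV S T (fun i j v => F i j v - G i j v) = TV S T F - TV S T G := by
  unfold TV; simp only [Finset.sum_sub_distrib]

lemma TV_cmul (c : ℝ) (F : ι → ι → ι → ℝ) :
    TV S T (fun i j v => c * F i j v) = c * TV S T F := by
  unfold TV; simp only [← Finset.mul_sum]

-- triple sums with last variable in S
def TU (F : ι → ι → ι → ℝ) : ℝ := ∑ i ∈ S, ∑ j ∈ T, ∑ u ∈ S, F i j u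

lemma TU_add (F G : ι → ι → ι → ℝ) :
    TU S T (fun i j u => F i j u + G i j u) = TU S T F + TU S T G := by
  unfold TU; simp only [Finset.sum_add_distrib]

lemma TU_sub (F G : ι → ι → ι → ℝ) :
    TU S T (fun i j u => F i j u - G i j u) = TU S T F - TU S T G := by
  unfold TU; simp only [Finset.sum_sub_distrib]

lemma TU_cmul (c : ℝ) (F : ι → ι → ι → ℝ) :
    TU S T (fun i j u => c * F i j u) = c * TU S T F := by
  unfold TU; simp only [← Finset.mul_sum]

lemma rowvar : TV S T (fun i j v => (a i j - a i v)^2)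
    = 2*(T.card : ℝ)*PP S T a - 2*RR S T a := by
  have e : (fun i j v => (a i j - a i v)^2)
      = (fun (i j v : ι) => ((a i j)^2 + (a i v)^2) - 2*(a i j * a i v)) := by
    funext i j v; ring
  rw [e, TV_sub, TV_add, TV_cmul]
  show (∑ i ∈ S, ∑ j ∈ T, ∑ _v ∈ T, (a i j)^2)
      + (∑ i ∈ S, ∑ _j ∈ T, ∑ v ∈ T, (a i v)^2)
      - 2 * (∑ i ∈ S, ∑ j ∈ T, ∑ v ∈ T, (a i j * a i v)) = _
  rw [t_sq_j, t_sq_v, t_cross]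
  ring

lemma rowfull : TV S T (fun i j v => (a i v - 2*a i j)^2)
    = 5*(T.card : ℝ)*PP S T a - 4*RR S T a := by
  have e : (fun i j v => (a i v - 2*a i j)^2)
      = (fun (i j v : ι) => ((a i v)^2 + 4*(a i j)^2) - 4*(a i j * a i v)) := by
    funext i j v; ring
  rw [e, TV_sub, TV_add, TV_cmul, TV_cmul]
  show (∑ i ∈ S, ∑ _j ∈ T, ∑ v ∈ T, (a i v)^2)
      + 4 * (∑ i ∈ S, ∑ j ∈ T, ∑ _v ∈ T, (a i j)^2)
      - 4 * (∑ i ∈ S, ∑ j ∈ T, ∑ v ∈ T, (a i j * a i v)) = _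
  rw [t_sq_j, t_sq_v, t_cross]
  ring

lemma colvar : TU S T (fun i j u => (a i j - a u j)^2)
    = 2*(S.card : ℝ)*PP S T a - 2*CC S T a := by
  have e : (fun i j u => (a i j - a u j)^2)
      = (fun (i j u : ι) => ((a i j)^2 + (a u j)^2) - 2*(a i j * a u j)) := by
    funext i j u; ring
  rw [e, TU_sub, TU_add, TU_cmul]
  show (∑ i ∈ S, ∑ j ∈ T, ∑ _u ∈ S, (a i j)^2)
      + (∑ _i ∈ S, ∑ j ∈ T, ∑ u ∈ S, (a u j)^2)
      - 2 * (∑ i ∈ S, ∑ j ∈ T, ∑ u ∈ S, (a i j * a u j)) = _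
  rw [s_sq_j, s_sq_u, s_cross]
  ring

lemma colfull : TU S T (fun i j u => (a u j - 2*a i j)^2)
    = 5*(S.card : ℝ)*PP S T a - 4*CC S T a := by
  have e : (fun i j u => (a u j - 2*a i j)^2)
      = (fun (i j u : ι) => ((a u j)^2 + 4*(a i j)^2) - 4*(a i j * a u j)) := by
    funext i j u; ring
  rw [e, TU_sub, TU_add, TU_cmul, TU_cmul]
  show (∑ _i ∈ S, ∑ j ∈ T, ∑ u ∈ S, (a u j)^2)
      + 4 * (∑ i ∈ S, ∑ j ∈ T, ∑ _u ∈ S, (a i j)^2)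
      - 4 * (∑ i ∈ S, ∑ j ∈ T, ∑ u ∈ S, (a i j * a u j)) = _
  rw [s_sq_j, s_sq_u, s_cross]
  ring

lemma quadexp : QS S T (fun i j u v => (a i j - a i v - a u j + a u v)^2)
    = 4*(S.card : ℝ)*(T.card : ℝ)*PP S T a - 4*(S.card : ℝ)*RR S T a
      - 4*(T.card : ℝ)*CC S T a + 4*(AA S T a)^2 := by
  have e : (fun i j u v => (a i j - a i v - a u j + a u v)^2)
      = (fun i j u v => (((((((((a i j)^2 + (a i v)^2) + (a u j)^2) + (a u v)^2)
        - 2*(a i j * a i v)) - 2*(a i j * a u j)) + 2*(a i j * a u v))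
        + 2*(a i v * a u j)) - 2*(a i v * a u v)) - 2*(a u j * a u v)) := by
    funext i j u v; ring
  rw [e, QS_sub, QS_sub, QS_add, QS_add, QS_sub, QS_sub, QS_add, QS_add, QS_add,
    QS_cmul, QS_cmul, QS_cmul, QS_cmul, QS_cmul, QS_cmul,
    q_sq1, q_sq2, q_sq3, q_sq4, q_12, q_13, q_14, q_23, q_24, q_34]
  ring

noncomputable def mm (i j u v : ι) : ℝ := (a i j + a i v + a u j + a u v)/4

lemma quadm : QS S T (fun i j u v => 4*(a i j - mm a i j u v)^2)
    = 3*(S.card : ℝ)*(T.card : ℝ)*PP S T a - (S.card : ℝ)*RR S T a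
      - (T.card : ℝ)*CC S T a - (AA S T a)^2 := by
  have e : (fun i j u v => 4*(a i j - mm a i j u v)^2)
      = (fun i j u v => ((((((((((9/4)*(a i j)^2 + (1/4)*(a i v)^2) + (1/4)*(a u j)^2)
        + (1/4)*(a u v)^2)
        - (3/2)*(a i j * a i v)) - (3/2)*(a i j * a u j)) - (3/2)*(a i j * a u v))
        + (1/2)*(a i v * a u j)) + (1/2)*(a i v * a u v)) + (1/2)*(a u j * a u v))) := by
    funext i j u v; unfold mm; ring
  rw [e]
  simp only [QS_add, QS_sub, QS_cmul]
  rw [q_sq1, q_sq2, q_sq3, q_sq4, q_12, q_13, q_14, q_23, q_24, q_34]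
  ring

end ALG2

namespace ALG2

variable {ι : Type*} [DecidableEq ι] (S T : Finset ι) (a : ι → ι → ℝ)

open RicSlice

lemma sum_erase_ite (s : Finset ι) (w : ι) (h : ι → ℝ) :
    ∑ t ∈ s.erase w, h t = ∑ t ∈ s, if t = w then 0 else h t := by
  rw [← Finset.filter_ne' s w, Finset.sum_filter]
  exact Finset.sum_congr rfl fun t _ => by by_cases h' : t = w <;> simp [h']

lemma QS_swapU (H : ι → ι → ι → ι → ℝ) :
    QS S T H = QS S T (fun i j u v => H u j i v) := by
  unfold QS
  calc ∑ i ∈ S, ∑ j ∈ T, ∑ u ∈ S, ∑ v ∈ T, H i j u v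
      = ∑ i ∈ S, ∑ u ∈ S, ∑ j ∈ T, ∑ v ∈ T, H i j u v :=
        Finset.sum_congr rfl fun i _ => Finset.sum_comm
    _ = ∑ u ∈ S, ∑ i ∈ S, ∑ j ∈ T, ∑ v ∈ T, H i j u v := Finset.sum_comm
    _ = ∑ i ∈ S, ∑ j ∈ T, ∑ u ∈ S, ∑ v ∈ T, H u j i v :=
        Finset.sum_congr rfl fun i _ => Finset.sum_comm

lemma QS_swapV (H : ι → ι → ι → ι → ℝ) :
    QS S T H = QS S T (fun i j u v => H i v u j) := by
  unfold QS
  refine Finset.sum_congr rfl fun i _ => ?_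
  calc ∑ j ∈ T, ∑ u ∈ S, ∑ v ∈ T, H i j u v
      = ∑ u ∈ S, ∑ j ∈ T, ∑ v ∈ T, H i j u v := Finset.sum_comm
    _ = ∑ u ∈ S, ∑ v ∈ T, ∑ j ∈ T, H i j u v :=
        Finset.sum_congr rfl fun u _ => Finset.sum_comm
    _ = ∑ j ∈ T, ∑ u ∈ S, ∑ v ∈ T, H i v u j := Finset.sum_comm

lemma QS_swapUV (H : ι → ι → ι → ι → ℝ) :
    QS S T H = QS S T (fun i j u v => H u v i j) := by
  calc QS S T H = QS S T (fun i j u v => H u j i v) := QS_swapU S T H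
    _ = QS S T (fun i j u v => H u v i j) := QS_swapV S T _

lemma erased_eq_QSite (g : ι → ι → ι → ι → ℝ) :
    ∑ i ∈ S, ∑ j ∈ T, ∑ u ∈ S.erase i, ∑ v ∈ T.erase j, g i j u v
    = QS S T (fun i j u v => if u = i then 0 else if v = j then 0 else g i j u v) := by
  unfold QS
  refine Finset.sum_congr rfl fun i _ => Finset.sum_congr rfl fun j _ => ?_
  rw [sum_erase_ite S i (fun u => ∑ v ∈ T.erase j, g i j u v)]
  refine Finset.sum_congr rfl fun u _ => ?_
  by_cases hui : u = i
  · simp [hui]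
  · simp only [hui, if_false]
    rw [sum_erase_ite T j (fun v => g i j u v)]

lemma erased_eq_sub (g : ι → ι → ι → ι → ℝ) :
    ∑ i ∈ S, ∑ j ∈ T, ∑ u ∈ S.erase i, ∑ v ∈ T.erase j, g i j u v
    = QS S T g - TV S T (fun i j v => g i j i v) - TU S T (fun i j u => g i j u j)
      + ∑ i ∈ S, ∑ j ∈ T, g i j i j := by
  have step : ∀ i ∈ S, ∀ j ∈ T, ∑ u ∈ S.erase i, ∑ v ∈ T.erase j, g i j u v
      = ((∑ u ∈ S, ∑ v ∈ T, g i j u v) - (∑ v ∈ T, g i j i v))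
        - ((∑ u ∈ S, g i j u j) - g i j i j) := by
    intro i hi j hj
    have e1 : ∀ u ∈ S.erase i, ∑ v ∈ T.erase j, g i j u v
        = ∑ v ∈ T, g i j u v - g i j u j := fun u _ => Finset.sum_erase_eq_sub hj
    rw [Finset.sum_congr rfl e1, Finset.sum_sub_distrib,
      Finset.sum_erase_eq_sub (f := fun u => ∑ v ∈ T, g i j u v) hi,
      Finset.sum_erase_eq_sub (f := fun u => g i j u j) hi]
  calc ∑ i ∈ S, ∑ j ∈ T, ∑ u ∈ S.erase i, ∑ v ∈ T.erase j, g i j u v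
      = ∑ i ∈ S, ∑ j ∈ T, (((∑ u ∈ S, ∑ v ∈ T, g i j u v) - (∑ v ∈ T, g i j i v))
        - ((∑ u ∈ S, g i j u j) - g i j i j)) :=
        Finset.sum_congr rfl fun i hi => Finset.sum_congr rfl fun j hj => step i hi j hj
    _ = _ := by
        simp only [Finset.sum_sub_distrib]
        unfold QS TV TU
        ring

end ALG2

namespace ALG2

variable {ι : Type*} [DecidableEq ι] (S T : Finset ι) (a : ι → ι → ℝ)
  (b : ι → ι → ι → ι → ℝ)

open RicSlice

noncomputable def FF (i j u v : ι) : ℝ :=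
  (b i j u v - 2 * mm a i j u v) * (a i j - mm a i j u v)

noncomputable def GG (i j u v : ι) : ℝ :=
  if u = i then 0 else if v = j then 0 else FF a b i j u v

lemma cross_zero
    (hb1 : ∀ i ∈ S, ∀ j ∈ T, ∀ u ∈ S, ∀ v ∈ T, u ≠ i → v ≠ j → b u j i v = b i j u v)
    (hb2 : ∀ i ∈ S, ∀ j ∈ T, ∀ u ∈ S, ∀ v ∈ T, u ≠ i → v ≠ j → b i v u j = b i j u v)
    (hb3 : ∀ i ∈ S, ∀ j ∈ T, ∀ u ∈ S, ∀ v ∈ T, u ≠ i → v ≠ j → b u v i j = b i j u v) :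
    QS S T (GG a b) = 0 := by
  have h4 : QS S T (fun i j u v => GG a b i j u v + (GG a b u j i v
      + (GG a b i v u j + GG a b u v i j))) = 4 * QS S T (GG a b) := by
    simp only [QS_add]
    rw [← QS_swapU S T (GG a b), ← QS_swapV S T (GG a b), ← QS_swapUV S T (GG a b)]
    ring
  have hz : QS S T (fun i j u v => GG a b i j u v + (GG a b u j i v
      + (GG a b i v u j + GG a b u v i j))) = 0 := by
    unfold QS
    apply Finset.sum_eq_zero; intro i hi
    apply Finset.sum_eq_zero; intro j hj
    apply Finset.sum_eq_zero; intro u hu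
    apply Finset.sum_eq_zero; intro v hv
    by_cases hui : u = i
    · subst hui; simp [GG]
    · by_cases hvj : v = j
      · subst hvj; simp [GG, hui, Ne.symm hui]
      · have hiu : i ≠ u := Ne.symm hui
        have hjv : j ≠ v := Ne.symm hvj
        simp only [GG, hui, hvj, hiu, hjv, if_false]
        unfold FF
        rw [hb1 i hi j hj u hu v hv hui hvj, hb2 i hi j hj u hu v hv hui hvj,
          hb3 i hi j hj u hu v hv hui hvj]
        unfold mm
        ring
  linarith

lemma qs_ite_nonneg (g : ι → ι → ι → ι → ℝ) (hg : ∀ i j u v, 0 ≤ g i j u v) :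
    0 ≤ QS S T (fun i j u v => if u = i then 0 else if v = j then 0 else g i j u v) := by
  unfold QS
  apply Finset.sum_nonneg; intro i _
  apply Finset.sum_nonneg; intro j _
  apply Finset.sum_nonneg; intro u _
  apply Finset.sum_nonneg; intro v _
  by_cases hui : u = i
  · simp [hui]
  · by_cases hvj : v = j
    · simp [hui, hvj]
    · simpa [hui, hvj] using hg i j u v

lemma bterm_ge
    (hb1 : ∀ i ∈ S, ∀ j ∈ T, ∀ u ∈ S, ∀ v ∈ T, u ≠ i → v ≠ j → b u j i v = b i j u v)
    (hb2 : ∀ i ∈ S, ∀ j ∈ T, ∀ u ∈ S, ∀ v ∈ T, u ≠ i → v ≠ j → b i v u j = b i j u v)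
    (hb3 : ∀ i ∈ S, ∀ j ∈ T, ∀ u ∈ S, ∀ v ∈ T, u ≠ i → v ≠ j → b u v i j = b i j u v) :
    (3*(S.card : ℝ)*(T.card : ℝ)*PP S T a - (S.card : ℝ)*RR S T a
      - (T.card : ℝ)*CC S T a - (AA S T a)^2)
    - (2*(T.card : ℝ)*PP S T a - 2*RR S T a) - (2*(S.card : ℝ)*PP S T a - 2*CC S T a)
    ≤ ∑ i ∈ S, ∑ j ∈ T, ∑ u ∈ S.erase i, ∑ v ∈ T.erase j, (b i j u v - 2*a i j)^2 := by
  -- decompose the erased sum via the ite representation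
  rw [erased_eq_QSite]
  have key : QS S T (fun i j u v => if u = i then 0 else if v = j then 0
        else (b i j u v - 2*a i j)^2)
      = QS S T (fun i j u v => if u = i then 0 else if v = j then 0
          else (b i j u v - 2*mm a i j u v)^2)
        - 4 * QS S T (GG a b)
        + QS S T (fun i j u v => if u = i then 0 else if v = j then 0
            else 4*(a i j - mm a i j u v)^2) := by
    rw [← QS_cmul, ← QS_sub, ← QS_add]
    unfold QS
    refine Finset.sum_congr rfl fun i _ => Finset.sum_congr rfl fun j _ =>
      Finset.sum_congr rfl fun u _ => Finset.sum_congr rfl fun v _ => ?_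
    by_cases hui : u = i
    · simp [GG, hui]
    · by_cases hvj : v = j
      · simp [GG, hui, hvj]
      · simp only [GG, hui, hvj, if_false]
        unfold FF
        ring
  rw [key, cross_zero S T a b hb1 hb2 hb3]
  have h1 : 0 ≤ QS S T (fun i j u v => if u = i then 0 else if v = j then 0
      else (b i j u v - 2*mm a i j u v)^2) :=
    qs_ite_nonneg S T _ (fun i j u v => sq_nonneg _)
  have h2 : QS S T (fun i j u v => if u = i then 0 else if v = j then 0
      else 4*(a i j - mm a i j u v)^2)
      = (3*(S.card : ℝ)*(T.card : ℝ)*PP S T a - (S.card : ℝ)*RR S T a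
        - (T.card : ℝ)*CC S T a - (AA S T a)^2)
      - (2*(T.card : ℝ)*PP S T a - 2*RR S T a)
      - (2*(S.card : ℝ)*PP S T a - 2*CC S T a) := by
    rw [← erased_eq_QSite, erased_eq_sub S T (fun i j u v => 4*(a i j - mm a i j u v)^2)]
    have e1 : TV S T (fun i j v => 4*(a i j - mm a i j i v)^2)
        = TV S T (fun i j v => (a i j - a i v)^2) := by
      unfold TV
      refine Finset.sum_congr rfl fun i _ => Finset.sum_congr rfl fun j _ =>
        Finset.sum_congr rfl fun v _ => ?_
      unfold mm; ring
    have e2 : TU S T (fun i j u => 4*(a i j - mm a i j u j)^2)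
        = TU S T (fun i j u => (a i j - a u j)^2) := by
      unfold TU
      refine Finset.sum_congr rfl fun i _ => Finset.sum_congr rfl fun j _ =>
        Finset.sum_congr rfl fun u _ => ?_
      unfold mm; ring
    have e3 : ∑ i ∈ S, ∑ j ∈ T, 4*(a i j - mm a i j i j)^2 = 0 := by
      apply Finset.sum_eq_zero; intro i _
      apply Finset.sum_eq_zero; intro j _
      unfold mm; ring
    rw [e1, e2, e3, quadm, rowvar, colvar]
    ring
  linarith

end ALG2

namespace ALG2

variable {ι : Type*} [DecidableEq ι] (S T : Finset ι) (a : ι → ι → ℝ)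
  (b : ι → ι → ι → ι → ℝ)

open RicSlice

lemma tv_sq_nonneg (g : ι → ι → ι → ℝ) : 0 ≤ TV S T (fun i j v => (g i j v)^2) := by
  unfold TV
  exact Finset.sum_nonneg fun i _ => Finset.sum_nonneg fun j _ =>
    Finset.sum_nonneg fun v _ => sq_nonneg _

lemma tu_sq_nonneg (g : ι → ι → ι → ℝ) : 0 ≤ TU S T (fun i j u => (g i j u)^2) := by
  unfold TU
  exact Finset.sum_nonneg fun i _ => Finset.sum_nonneg fun j _ =>
    Finset.sum_nonneg fun u _ => sq_nonneg _

lemma qs_sq_nonneg (g : ι → ι → ι → ι → ℝ) : 0 ≤ QS S T (fun i j u v => (g i j u v)^2) := by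
  unfold QS
  exact Finset.sum_nonneg fun i _ => Finset.sum_nonneg fun j _ =>
    Finset.sum_nonneg fun u _ => Finset.sum_nonneg fun v _ => sq_nonneg _

lemma master
    (hb1 : ∀ i ∈ S, ∀ j ∈ T, ∀ u ∈ S, ∀ v ∈ T, u ≠ i → v ≠ j → b u j i v = b i j u v)
    (hb2 : ∀ i ∈ S, ∀ j ∈ T, ∀ u ∈ S, ∀ v ∈ T, u ≠ i → v ≠ j → b i v u j = b i j u v)
    (hb3 : ∀ i ∈ S, ∀ j ∈ T, ∀ u ∈ S, ∀ v ∈ T, u ≠ i → v ≠ j → b u v i j = b i j u v) :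
    (2*(S.card : ℝ)*(T.card : ℝ) + (S.card : ℝ) + (T.card : ℝ) + 2) * PP S T a
      - 2*(AA S T a)^2
    ≤ ∑ i ∈ S, ∑ j ∈ T, (4*(a i j)^2
        + ∑ v ∈ T.erase j, (a i v - 2*a i j)^2
        + ∑ u ∈ S.erase i, (a u j - 2*a i j)^2
        + ∑ u ∈ S.erase i, ∑ v ∈ T.erase j, (b i j u v - 2*a i j)^2) := by
  have split : ∑ i ∈ S, ∑ j ∈ T, (4*(a i j)^2
        + ∑ v ∈ T.erase j, (a i v - 2*a i j)^2
        + ∑ u ∈ S.erase i, (a u j - 2*a i j)^2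
        + ∑ u ∈ S.erase i, ∑ v ∈ T.erase j, (b i j u v - 2*a i j)^2)
      = (∑ i ∈ S, ∑ j ∈ T, 4*(a i j)^2)
        + (∑ i ∈ S, ∑ j ∈ T, ∑ v ∈ T.erase j, (a i v - 2*a i j)^2)
        + (∑ i ∈ S, ∑ j ∈ T, ∑ u ∈ S.erase i, (a u j - 2*a i j)^2)
        + (∑ i ∈ S, ∑ j ∈ T, ∑ u ∈ S.erase i, ∑ v ∈ T.erase j,
            (b i j u v - 2*a i j)^2) := by
    simp only [Finset.sum_add_distrib]
  have hT1 : ∑ i ∈ S, ∑ j ∈ T, 4*(a i j)^2 = 4 * PP S T a := by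
    rw [PP]; simp only [← Finset.mul_sum]
  have hdiag : ∑ i ∈ S, ∑ j ∈ T, (a i j - 2*a i j)^2 = PP S T a := by
    rw [PP]
    exact Finset.sum_congr rfl fun i _ => Finset.sum_congr rfl fun j _ => by ring
  have hT2 : ∑ i ∈ S, ∑ j ∈ T, ∑ v ∈ T.erase j, (a i v - 2*a i j)^2
      = 5*(T.card : ℝ)*PP S T a - 4*RR S T a - PP S T a := by
    have e : ∀ i ∈ S, ∀ j ∈ T, ∑ v ∈ T.erase j, (a i v - 2*a i j)^2
        = (∑ v ∈ T, (a i v - 2*a i j)^2) - (a i j - 2*a i j)^2 :=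
      fun i _ j hj => Finset.sum_erase_eq_sub hj
    calc ∑ i ∈ S, ∑ j ∈ T, ∑ v ∈ T.erase j, (a i v - 2*a i j)^2
        = ∑ i ∈ S, ∑ j ∈ T, ((∑ v ∈ T, (a i v - 2*a i j)^2) - (a i j - 2*a i j)^2) :=
          Finset.sum_congr rfl fun i hi => Finset.sum_congr rfl fun j hj => e i hi j hj
      _ = TV S T (fun i j v => (a i v - 2*a i j)^2)
          - ∑ i ∈ S, ∑ j ∈ T, (a i j - 2*a i j)^2 := by
          simp only [Finset.sum_sub_distrib]; rfl
      _ = 5*(T.card : ℝ)*PP S T a - 4*RR S T a - PP S T a := by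
          rw [rowfull, hdiag]
  have hT3 : ∑ i ∈ S, ∑ j ∈ T, ∑ u ∈ S.erase i, (a u j - 2*a i j)^2
      = 5*(S.card : ℝ)*PP S T a - 4*CC S T a - PP S T a := by
    have e : ∀ i ∈ S, ∀ j ∈ T, ∑ u ∈ S.erase i, (a u j - 2*a i j)^2
        = (∑ u ∈ S, (a u j - 2*a i j)^2) - (a i j - 2*a i j)^2 :=
      fun i hi j _ => Finset.sum_erase_eq_sub hi
    calc ∑ i ∈ S, ∑ j ∈ T, ∑ u ∈ S.erase i, (a u j - 2*a i j)^2
        = ∑ i ∈ S, ∑ j ∈ T, ((∑ u ∈ S, (a u j - 2*a i j)^2) - (a i j - 2*a i j)^2) :=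
          Finset.sum_congr rfl fun i hi => Finset.sum_congr rfl fun j hj => e i hi j hj
      _ = TU S T (fun i j u => (a u j - 2*a i j)^2)
          - ∑ i ∈ S, ∑ j ∈ T, (a i j - 2*a i j)^2 := by
          simp only [Finset.sum_sub_distrib]; rfl
      _ = 5*(S.card : ℝ)*PP S T a - 4*CC S T a - PP S T a := by
          rw [colfull, hdiag]
  have hT4 := bterm_ge S T a b hb1 hb2 hb3
  have hN1 : 0 ≤ 2*(T.card : ℝ)*PP S T a - 2*RR S T a := by
    rw [← rowvar]; exact tv_sq_nonneg S T _
  have hN2 : 0 ≤ 2*(S.card : ℝ)*PP S T a - 2*CC S T a := by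
    rw [← colvar]; exact tu_sq_nonneg S T _
  have hN3 : 0 ≤ 4*(S.card : ℝ)*(T.card : ℝ)*PP S T a - 4*(S.card : ℝ)*RR S T a
      - 4*(T.card : ℝ)*CC S T a + 4*(AA S T a)^2 := by
    rw [← quadexp]; exact qs_sq_nonneg S T _
  rw [split, hT1, hT2, hT3]
  linarith

end ALG2


namespace RicSlice

variable {n k : ℕ}

lemma Sx_flip {x : Slice n k} {i j : Fin n} (hi : x.1 i = true) (hj : x.1 j = false) :
    Sx (flipS x i j) = insert j ((Sx x).erase i) := by
  have : Sx (flipS x i j) = Finset.univ.filter fun t => flipf x.1 i j t = true := by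
    unfold Sx; rw [flipS_val hi hj]
  rw [this, Sfilter_flipf hi hj]

lemma Tx_flip {x : Slice n k} {i j : Fin n} (hi : x.1 i = true) (hj : x.1 j = false) :
    Tx (flipS x i j) = insert i ((Tx x).erase j) := by
  have hij : i ≠ j := ne_of_tf hi hj
  ext t
  simp only [mem_Tx, flipS_apply hi hj, Finset.mem_insert, Finset.mem_erase, mem_Tx]
  by_cases h1 : t = i
  · subst h1; simp [hij, hi]
  · by_cases h2 : t = j
    · subst h2; simp [hj, Ne.symm hij]
    · simp [h1, h2]

lemma j_notmem {x : Slice n k} {i j : Fin n} (hj : x.1 j = false) :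
    j ∉ (Sx x).erase i := fun h => by
  have := mem_Sx.1 (Finset.mem_of_mem_erase h); rw [hj] at this; exact Bool.noConfusion this

lemma i_notmem {x : Slice n k} {i j : Fin n} (hi : x.1 i = true) :
    i ∉ (Tx x).erase j := fun h => by
  have := mem_Tx.1 (Finset.mem_of_mem_erase h); rw [hi] at this; exact Bool.noConfusion this

lemma lap_slice (f : Slice n k → ℝ) (x : Slice n k) :
    lap (sliceGraph n k) f x = ∑ i ∈ Sx x, ∑ j ∈ Tx x, (f (flipS x i j) - f x) := by
  rw [lap_eq, sum_nbh]

lemma gam_slice (f : Slice n k → ℝ) (x : Slice n k) :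
    gam (sliceGraph n k) f f x
      = (1/2) * ∑ i ∈ Sx x, ∑ j ∈ Tx x, (f (flipS x i j) - f x)^2 := by
  rw [gam_sq, sum_nbh x (fun y => (f x - f y)^2)]
  congr 1
  exact Finset.sum_congr rfl fun i _ => Finset.sum_congr rfl fun j _ => by ring

lemma inner_split (f : Slice n k → ℝ) (x : Slice n k) :
    ∀ i ∈ Sx x, ∀ j ∈ Tx x,
      (∑ z ∈ nbh (sliceGraph n k) (flipS x i j),
        (f x - 2*f (flipS x i j) + f z)^2)
      = 4*(f (flipS x i j) - f x)^2
        + ∑ v ∈ (Tx x).erase j,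
            ((f (flipS x i v) - f x) - 2*(f (flipS x i j) - f x))^2
        + ∑ u ∈ (Sx x).erase i,
            ((f (flipS x u j) - f x) - 2*(f (flipS x i j) - f x))^2
        + ∑ u ∈ (Sx x).erase i, ∑ v ∈ (Tx x).erase j,
            ((f (flipS (flipS x i j) u v) - f x) - 2*(f (flipS x i j) - f x))^2 := by
  intro i hi' j hj'
  have hi : x.1 i = true := mem_Sx.1 hi'
  have hj : x.1 j = false := mem_Tx.1 hj'
  rw [sum_nbh (flipS x i j) (fun z => (f x - 2*f (flipS x i j) + f z)^2),
    Sx_flip hi hj, Tx_flip hi hj,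
    Finset.sum_insert (j_notmem hj)]
  have e0 : ∑ v ∈ insert i ((Tx x).erase j),
      (f x - 2*f (flipS x i j) + f (flipS (flipS x i j) j v))^2
      = (f x - 2*f (flipS x i j) + f x)^2
        + ∑ v ∈ (Tx x).erase j,
            (f x - 2*f (flipS x i j) + f (flipS x i v))^2 := by
    rw [Finset.sum_insert (i_notmem hi), flip_inv hi hj]
    congr 1
    refine Finset.sum_congr rfl fun v hv => ?_
    rw [flip_row hi hj (mem_Tx.1 (Finset.mem_of_mem_erase hv)) (Finset.ne_of_mem_erase hv)]
  have e1 : ∀ u ∈ (Sx x).erase i, ∑ v ∈ insert i ((Tx x).erase j),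
      (f x - 2*f (flipS x i j) + f (flipS (flipS x i j) u v))^2
      = (f x - 2*f (flipS x i j) + f (flipS x u j))^2
        + ∑ v ∈ (Tx x).erase j,
            (f x - 2*f (flipS x i j) + f (flipS (flipS x i j) u v))^2 := by
    intro u hu
    rw [Finset.sum_insert (i_notmem hi),
      flip_col hi hj (mem_Sx.1 (Finset.mem_of_mem_erase hu)) (Finset.ne_of_mem_erase hu)]
  rw [e0, Finset.sum_congr rfl e1, Finset.sum_add_distrib]
  have r1 : ∑ v ∈ (Tx x).erase j, (f x - 2*f (flipS x i j) + f (flipS x i v))^2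
      = ∑ v ∈ (Tx x).erase j,
          ((f (flipS x i v) - f x) - 2*(f (flipS x i j) - f x))^2 :=
    Finset.sum_congr rfl fun v _ => by ring
  have r2 : ∑ u ∈ (Sx x).erase i, (f x - 2*f (flipS x i j) + f (flipS x u j))^2
      = ∑ u ∈ (Sx x).erase i,
          ((f (flipS x u j) - f x) - 2*(f (flipS x i j) - f x))^2 :=
    Finset.sum_congr rfl fun u _ => by ring
  have r3 : ∑ u ∈ (Sx x).erase i, ∑ v ∈ (Tx x).erase j,
      (f x - 2*f (flipS x i j) + f (flipS (flipS x i j) u v))^2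
      = ∑ u ∈ (Sx x).erase i, ∑ v ∈ (Tx x).erase j,
          ((f (flipS (flipS x i j) u v) - f x) - 2*(f (flipS x i j) - f x))^2 :=
    Finset.sum_congr rfl fun u _ => Finset.sum_congr rfl fun v _ => by ring
  rw [r1, r2, r3]
  ring

lemma gam2_slice (f : Slice n k → ℝ) (x : Slice n k) :
    gam2 (sliceGraph n k) f x
      = (1/4) * (∑ i ∈ Sx x, ∑ j ∈ Tx x,
          (4*(f (flipS x i j) - f x)^2
            + ∑ v ∈ (Tx x).erase j,
                ((f (flipS x i v) - f x) - 2*(f (flipS x i j) - f x))^2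
            + ∑ u ∈ (Sx x).erase i,
                ((f (flipS x u j) - f x) - 2*(f (flipS x i j) - f x))^2
            + ∑ u ∈ (Sx x).erase i, ∑ v ∈ (Tx x).erase j,
                ((f (flipS (flipS x i j) u v) - f x) - 2*(f (flipS x i j) - f x))^2))
        - ((k * (n - k) : ℕ) : ℝ) * gam (sliceGraph n k) f f x
        + (1/2) * (lap (sliceGraph n k) f x)^2 := by
  rw [gam2_eq]
  have hdeg : ∑ y ∈ nbh (sliceGraph n k) x,
      (((nbh (sliceGraph n k) x).card : ℝ) + ((nbh (sliceGraph n k) y).card : ℝ))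
        * (f x - f y)^2
      = 2 * ((k * (n - k) : ℕ) : ℝ) * ∑ y ∈ nbh (sliceGraph n k) x, (f x - f y)^2 := by
    rw [Finset.mul_sum]
    refine Finset.sum_congr rfl fun y _ => ?_
    rw [card_nbh, card_nbh]
    push_cast
    ring
  have hgam : ∑ y ∈ nbh (sliceGraph n k) x, (f x - f y)^2
      = 2 * gam (sliceGraph n k) f f x := by
    rw [gam_sq]; ring
  have hbig : ∑ y ∈ nbh (sliceGraph n k) x, ∑ z ∈ nbh (sliceGraph n k) y,
      (f x - 2*f y + f z)^2
      = ∑ i ∈ Sx x, ∑ j ∈ Tx x,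
          (4*(f (flipS x i j) - f x)^2
            + ∑ v ∈ (Tx x).erase j,
                ((f (flipS x i v) - f x) - 2*(f (flipS x i j) - f x))^2
            + ∑ u ∈ (Sx x).erase i,
                ((f (flipS x u j) - f x) - 2*(f (flipS x i j) - f x))^2
            + ∑ u ∈ (Sx x).erase i, ∑ v ∈ (Tx x).erase j,
                ((f (flipS (flipS x i j) u v) - f x) - 2*(f (flipS x i j) - f x))^2) := by
    rw [sum_nbh x (fun y => ∑ z ∈ nbh (sliceGraph n k) y, (f x - 2*f y + f z)^2)]
    exact Finset.sum_congr rfl fun i hi => Finset.sum_congr rfl fun j hj =>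
      inner_split f x i hi j hj
  rw [hdeg, hgam, hbig]
  ring

end RicSlice

namespace RicSlice

variable {n k : ℕ}

lemma master' {ι : Type*} [DecidableEq ι] (S T : Finset ι) (a : ι → ι → ℝ)
    (b : ι → ι → ι → ι → ℝ)
    (hb1 : ∀ i ∈ S, ∀ j ∈ T, ∀ u ∈ S, ∀ v ∈ T, u ≠ i → v ≠ j → b u j i v = b i j u v)
    (hb2 : ∀ i ∈ S, ∀ j ∈ T, ∀ u ∈ S, ∀ v ∈ T, u ≠ i → v ≠ j → b i v u j = b i j u v)
    (hb3 : ∀ i ∈ S, ∀ j ∈ T, ∀ u ∈ S, ∀ v ∈ T, u ≠ i → v ≠ j → b u v i j = b i j u v) :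
    (2*(S.card : ℝ)*(T.card : ℝ) + (S.card : ℝ) + (T.card : ℝ) + 2)
        * (∑ i ∈ S, ∑ j ∈ T, (a i j)^2)
      - 2*(∑ i ∈ S, ∑ j ∈ T, a i j)^2
    ≤ ∑ i ∈ S, ∑ j ∈ T, (4*(a i j)^2
        + ∑ v ∈ T.erase j, (a i v - 2*a i j)^2
        + ∑ u ∈ S.erase i, (a u j - 2*a i j)^2
        + ∑ u ∈ S.erase i, ∑ v ∈ T.erase j, (b i j u v - 2*a i j)^2) := by
  have h := ALG2.master S T a b hb1 hb2 hb3
  unfold PP AA at h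
  exact h

theorem ric_lower (hkn : k ≤ n) : RicGE (sliceGraph n k) (1 + (n : ℝ)/2) := by
  intro f x
  have hb1 : ∀ i ∈ Sx x, ∀ j ∈ Tx x, ∀ u ∈ Sx x, ∀ v ∈ Tx x, u ≠ i → v ≠ j →
      f (flipS (flipS x u j) i v) - f x = f (flipS (flipS x i j) u v) - f x := by
    intro i hi j hj u hu v hv hui hvj
    rw [← flip2_symm_left (mem_Sx.1 hi) (mem_Tx.1 hj) (mem_Sx.1 hu) hui (mem_Tx.1 hv) hvj]
  have hb2 : ∀ i ∈ Sx x, ∀ j ∈ Tx x, ∀ u ∈ Sx x, ∀ v ∈ Tx x, u ≠ i → v ≠ j →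
      f (flipS (flipS x i v) u j) - f x = f (flipS (flipS x i j) u v) - f x := by
    intro i hi j hj u hu v hv hui hvj
    rw [← flip2_symm_right (mem_Sx.1 hi) (mem_Tx.1 hj) (mem_Sx.1 hu) hui (mem_Tx.1 hv) hvj]
  have hb3 : ∀ i ∈ Sx x, ∀ j ∈ Tx x, ∀ u ∈ Sx x, ∀ v ∈ Tx x, u ≠ i → v ≠ j →
      f (flipS (flipS x u v) i j) - f x = f (flipS (flipS x i j) u v) - f x := by
    intro i hi j hj u hu v hv hui hvj
    rw [flip2_symm_right (mem_Sx.1 hi) (mem_Tx.1 hj) (mem_Sx.1 hu) hui (mem_Tx.1 hv) hvj,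
      flip2_symm_left (mem_Sx.1 hu) (mem_Tx.1 hv) (mem_Sx.1 hi) (Ne.symm hui)
        (mem_Tx.1 hj) (Ne.symm hvj)]
  have hm := master' (Sx x) (Tx x) (fun p q => f (flipS x p q) - f x)
    (fun p q r s => f (flipS (flipS x p q) r s) - f x) hb1 hb2 hb3
  beta_reduce at hm
  rw [card_Sx, card_Tx] at hm
  rw [gam2_slice f x, gam_slice f x, lap_slice f x]
  have c1 : ((n - k : ℕ) : ℝ) = (n : ℝ) - (k : ℝ) := by
    push_cast [Nat.cast_sub hkn]; ring
  have c2 : ((k * (n - k) : ℕ) : ℝ) = (k : ℝ) * ((n : ℝ) - (k : ℝ)) := by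
    push_cast [Nat.cast_sub hkn]; ring
  rw [c1] at hm
  rw [c2]
  linarith [hm]

end RicSlice

namespace RicSlice

variable {n k : ℕ}

lemma card_filter_lt (hkn : k ≤ n) :
    (Finset.univ.filter fun i : Fin n => (i : ℕ) < k).card = k := by
  have e : Finset.univ.filter (fun i : Fin n => (i : ℕ) < k)
      = Finset.map (Fin.castLEEmb hkn) Finset.univ := by
    ext t
    simp only [Finset.mem_filter, Finset.mem_univ, true_and]
    constructor
    · intro h
      exact Finset.mem_map.2 ⟨⟨(t : ℕ), h⟩, Finset.mem_univ _,
        by simp [Fin.castLEEmb, Fin.castLE]⟩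
    · intro h
      obtain ⟨a, -, rfl⟩ := Finset.mem_map.1 h
      simpa [Fin.castLEEmb, Fin.castLE] using a.2
  rw [e, Finset.card_map, Finset.card_univ, Fintype.card_fin]

noncomputable def x0 (n k : ℕ) (hkn : k ≤ n) : Slice n k :=
  ⟨fun i => decide ((i : ℕ) < k), by
    have : (Finset.univ.filter fun i : Fin n => (decide ((i : ℕ) < k)) = true)
        = Finset.univ.filter fun i : Fin n => (i : ℕ) < k := by
      apply Finset.filter_congr; intro i _; simp
    rw [this, card_filter_lt hkn]⟩

noncomputable def distF (x : Slice n k) (v : Slice n k) : ℝ :=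
  ((Finset.univ.filter fun t => x.1 t = true ∧ v.1 t = false).card : ℝ)

lemma distF_x (x : Slice n k) : distF x x = 0 := by
  unfold distF
  have : (Finset.univ.filter fun t => x.1 t = true ∧ x.1 t = false) = ∅ :=
    Finset.eq_empty_of_forall_notMem fun t ht => by
      rw [Finset.mem_filter] at ht
      rw [ht.2.1] at ht
      exact Bool.noConfusion ht.2.2
  rw [this, Finset.card_empty]
  norm_num

lemma distF_a {x : Slice n k} {i j : Fin n} (hi : x.1 i = true) (hj : x.1 j = false) :
    distF x (flipS x i j) = 1 := by
  unfold distF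
  have hij : i ≠ j := ne_of_tf hi hj
  have : (Finset.univ.filter fun t => x.1 t = true ∧ (flipS x i j).1 t = false) = {i} := by
    ext t
    simp only [Finset.mem_filter, Finset.mem_univ, true_and, Finset.mem_singleton,
      flipS_apply hi hj]
    by_cases h1 : t = i
    · subst h1; simp [hi, hij]
    · by_cases h2 : t = j
      · subst h2; simp [hj, h1]
      · simp only [h1, h2, or_self, if_false, Finset.mem_singleton]
        constructor
        · rintro ⟨h3, h4⟩; rw [h3] at h4; exact Bool.noConfusion h4
        · intro h3; exact h3.elim
  rw [this, Finset.card_singleton]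
  norm_num

lemma distF_b {x : Slice n k} {i j u v : Fin n} (hi : x.1 i = true) (hj : x.1 j = false)
    (hu : x.1 u = true) (hui : u ≠ i) (hv : x.1 v = false) (hvj : v ≠ j) :
    distF x (flipS (flipS x i j) u v) = 2 := by
  unfold distF
  have hij : i ≠ j := ne_of_tf hi hj
  have huj : u ≠ j := ne_of_tf hu hj
  have hiv : i ≠ v := ne_of_tf hi hv
  have huv : u ≠ v := ne_of_tf hu hv
  obtain ⟨h1u, h1v⟩ := flip2_mem hi hj hu hui hv hvj
  have : (Finset.univ.filter fun t => x.1 t = true ∧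
      (flipS (flipS x i j) u v).1 t = false) = {i, u} := by
    ext t
    simp only [Finset.mem_filter, Finset.mem_univ, true_and, Finset.mem_insert,
      Finset.mem_singleton, flipS_apply h1u h1v, flipS_apply hi hj]
    by_cases e1 : t = i <;> by_cases e2 : t = j <;> by_cases e3 : t = u <;>
      by_cases e4 : t = v <;> simp_all
  rw [this, Finset.card_insert_of_notMem (by simp [Ne.symm hui]), Finset.card_singleton]
  norm_num

lemma gam_at (hk : 1 ≤ k) (hkn : k < n) (x : Slice n k) :
    gam (sliceGraph n k) (distF x) (distF x) x
      = (1/2) * ((k : ℝ) * ((n : ℝ) - (k : ℝ))) := by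
  rw [gam_slice]
  have e : ∀ i ∈ Sx x, ∀ j ∈ Tx x, (distF x (flipS x i j) - distF x x)^2 = 1 := by
    intro i hi j hj
    rw [distF_a (mem_Sx.1 hi) (mem_Tx.1 hj), distF_x]
    norm_num
  have : ∑ i ∈ Sx x, ∑ j ∈ Tx x, (distF x (flipS x i j) - distF x x)^2
      = ∑ i ∈ Sx x, ∑ _j ∈ Tx x, (1 : ℝ) :=
    Finset.sum_congr rfl fun i hi => Finset.sum_congr rfl fun j hj => e i hi j hj
  rw [this]
  have : ∑ i ∈ Sx x, ∑ _j ∈ Tx x, (1 : ℝ) = ∑ _i ∈ Sx x, ((Tx x).card : ℝ) :=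
    Finset.sum_congr rfl fun i _ => by rw [sum_indep]; ring
  rw [this, sum_indep, card_Sx, card_Tx]
  have : ((n - k : ℕ) : ℝ) = (n : ℝ) - (k : ℝ) := by push_cast [Nat.cast_sub hkn.le]; ring
  rw [this]

lemma lap_at (x : Slice n k) :
    lap (sliceGraph n k) (distF x) x = (k : ℝ) * ((Tx x).card : ℝ) := by
  rw [lap_slice]
  have : ∑ i ∈ Sx x, ∑ j ∈ Tx x, (distF x (flipS x i j) - distF x x)
      = ∑ i ∈ Sx x, ∑ _j ∈ Tx x, (1 : ℝ) :=
    Finset.sum_congr rfl fun i hi => Finset.sum_congr rfl fun j hj => by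
      rw [distF_a (mem_Sx.1 hi) (mem_Tx.1 hj), distF_x]; norm_num
  rw [this]
  have : ∑ i ∈ Sx x, ∑ _j ∈ Tx x, (1 : ℝ) = ∑ _i ∈ Sx x, ((Tx x).card : ℝ) :=
    Finset.sum_congr rfl fun i _ => by rw [sum_indep]; ring
  rw [this, sum_indep, card_Sx]

end RicSlice

namespace RicSlice

variable {n k : ℕ}

lemma gam2_at (hk : 1 ≤ k) (hkn : k < n) (x : Slice n k) :
    gam2 (sliceGraph n k) (distF x) x
      = (1/4) * ((k : ℝ) * ((n : ℝ) - (k : ℝ))) * ((n : ℝ) + 2) := by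
  rw [gam2_slice (distF x) x, gam_at hk hkn x, lap_at x]
  have hE : ∀ i ∈ Sx x, ∀ j ∈ Tx x,
      (4*(distF x (flipS x i j) - distF x x)^2
        + ∑ v ∈ (Tx x).erase j,
            ((distF x (flipS x i v) - distF x x)
              - 2*(distF x (flipS x i j) - distF x x))^2
        + ∑ u ∈ (Sx x).erase i,
            ((distF x (flipS x u j) - distF x x)
              - 2*(distF x (flipS x i j) - distF x x))^2
        + ∑ u ∈ (Sx x).erase i, ∑ v ∈ (Tx x).erase j,
            ((distF x (flipS (flipS x i j) u v) - distF x x)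
              - 2*(distF x (flipS x i j) - distF x x))^2)
      = (n : ℝ) + 2 := by
    intro i hi j hj
    have hi' := mem_Sx.1 hi
    have hj' := mem_Tx.1 hj
    have e2 : ∑ v ∈ (Tx x).erase j,
        ((distF x (flipS x i v) - distF x x)
          - 2*(distF x (flipS x i j) - distF x x))^2
        = ∑ _v ∈ (Tx x).erase j, (1 : ℝ) := by
      refine Finset.sum_congr rfl fun v hv => ?_
      rw [distF_a hi' (mem_Tx.1 (Finset.mem_of_mem_erase hv)), distF_a hi' hj', distF_x]
      norm_num
    have e3 : ∑ u ∈ (Sx x).erase i,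
        ((distF x (flipS x u j) - distF x x)
          - 2*(distF x (flipS x i j) - distF x x))^2
        = ∑ _u ∈ (Sx x).erase i, (1 : ℝ) := by
      refine Finset.sum_congr rfl fun u hu => ?_
      rw [distF_a (mem_Sx.1 (Finset.mem_of_mem_erase hu)) hj', distF_a hi' hj', distF_x]
      norm_num
    have e4 : ∑ u ∈ (Sx x).erase i, ∑ v ∈ (Tx x).erase j,
        ((distF x (flipS (flipS x i j) u v) - distF x x)
          - 2*(distF x (flipS x i j) - distF x x))^2 = 0 := by
      apply Finset.sum_eq_zero; intro u hu
      apply Finset.sum_eq_zero; intro v hv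
      rw [distF_b hi' hj' (mem_Sx.1 (Finset.mem_of_mem_erase hu)) (Finset.ne_of_mem_erase hu)
          (mem_Tx.1 (Finset.mem_of_mem_erase hv)) (Finset.ne_of_mem_erase hv),
        distF_a hi' hj', distF_x]
      norm_num
    rw [e2, e3, e4, distF_a hi' hj', distF_x, sum_indep, sum_indep,
      Finset.card_erase_of_mem hj, Finset.card_erase_of_mem hi, card_Sx, card_Tx]
    have c1 : ((n - k - 1 : ℕ) : ℝ) = (n : ℝ) - (k : ℝ) - 1 := by
      have : (1 : ℕ) ≤ n - k := by omega
      push_cast [Nat.cast_sub hkn.le, Nat.cast_sub this]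
      ring
    have c2 : ((k - 1 : ℕ) : ℝ) = (k : ℝ) - 1 := by
      push_cast [Nat.cast_sub hk]
      ring
    rw [c1, c2]
    ring
  rw [Finset.sum_congr rfl (fun i hi => Finset.sum_congr rfl (fun j hj => hE i hi j hj))]
  have hsum : ∑ _i ∈ Sx x, ∑ _j ∈ Tx x, ((n : ℝ) + 2)
      = (k : ℝ) * ((n : ℝ) - (k : ℝ)) * ((n : ℝ) + 2) := by
    have : ∑ _i ∈ Sx x, ∑ _j ∈ Tx x, ((n : ℝ) + 2)
        = ∑ _i ∈ Sx x, ((Tx x).card : ℝ) * ((n : ℝ) + 2) :=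
      Finset.sum_congr rfl fun i _ => by rw [sum_indep]
    rw [this, sum_indep, card_Sx, card_Tx]
    have : ((n - k : ℕ) : ℝ) = (n : ℝ) - (k : ℝ) := by push_cast [Nat.cast_sub hkn.le]; ring
    rw [this]
    ring
  rw [hsum, card_Tx]
  have c3 : ((k * (n - k) : ℕ) : ℝ) = (k : ℝ) * ((n : ℝ) - (k : ℝ)) := by
    push_cast [Nat.cast_sub hkn.le]; ring
  have c4 : ((n - k : ℕ) : ℝ) = (n : ℝ) - (k : ℝ) := by push_cast [Nat.cast_sub hkn.le]; ring
  rw [c3, c4]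
  ring

theorem ric_upper (hk : 1 ≤ k) (hkn : k < n) :
    ∀ K : ℝ, RicGE (sliceGraph n k) K → K ≤ 1 + (n : ℝ) / 2 := by
  intro K hK
  have h := hK (distF (x0 n k hkn.le)) (x0 n k hkn.le)
  rw [gam_at hk hkn, gam2_at hk hkn] at h
  have h1 : (1:ℝ) ≤ (k:ℝ) := by exact_mod_cast hk
  have h2 : (k:ℝ) < (n:ℝ) := by exact_mod_cast hkn
  have hd : 0 < (k:ℝ) * ((n:ℝ) - (k:ℝ)) := by nlinarith
  by_contra hcon
  push_neg at hcon
  have hp : 0 < (K - (1 + (n:ℝ)/2)) * ((1/2) * ((k:ℝ) * ((n:ℝ) - (k:ℝ)))) :=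
    mul_pos (by linarith) (by linarith)
  nlinarith

end RicSlice


/-- for `1 ≤ k < n`, the `k`-slice of the hypercube with transpositions
has `Ric = 1 + n/2`. -/
theorem ric_slice (n k : ℕ) (hk : 1 ≤ k) (hkn : k < n) :
    RicGE (sliceGraph n k) (1 + (n : ℝ) / 2) ∧
      ∀ K : ℝ, RicGE (sliceGraph n k) K → K ≤ 1 + (n : ℝ) / 2 :=
  ⟨RicSlice.ric_lower hkn.le, RicSlice.ric_upper hk hkn⟩
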